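/- Let (ε_n)_{n≥2} be independent random variables with P(ε_n = a_n) = 1 - 1/n² and P(ε_n = c_n) = 1/n², where a_n = (1/n + 1/n³)/√(1 + 1/n² - 1/n⁴ - 1/n⁶) and c_n = (-n + 1/n³)/√(1 + 1/n² - 1/n⁴ - 1/n⁶). Then E ε_n = 0 and E ε_n² = 1 for all n ≥ 2, and the partial sums ∑_{i=2}^k ε_i converge to +∞ almost surely as k → ∞. -/

import Mathlib

open MeasureTheory ProbabilityTheory Filter

lemma two_point_integral (f : ℝ → ℝ) (p q : ENNReal) (hp : p ≠ ⊤) (hq : q ≠ ⊤) (x y : ℝ) :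
    ∫ t, f t ∂(p • Measure.dirac x + q • Measure.dirac y) =
      p.toReal * f x + q.toReal * f y := by
  have hax : Integrable f (Measure.dirac x) := by
    refine (integrable_const (f x)).congr ?_
    rw [Filter.EventuallyEq, ae_dirac_eq]
    exact eventually_pure.2 rfl
  have hay : Integrable f (Measure.dirac y) := by
    refine (integrable_const (f y)).congr ?_
    rw [Filter.EventuallyEq, ae_dirac_eq]
    exact eventually_pure.2 rfl
  rw [integral_add_measure (hax.smul_measure hp) (hay.smul_measure hq),
    integral_smul_measure, integral_smul_measure, integral_dirac, integral_dirac,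
    smul_eq_mul, smul_eq_mul]

theorem stmt6 {Ω : Type*} [MeasurableSpace Ω] (μ : Measure Ω) [IsProbabilityMeasure μ]
    (ε : ℕ → Ω → ℝ)
    (hmeas : ∀ n, Measurable (ε n))
    (hindep : iIndepFun ε μ)
    (a c : ℕ → ℝ)
    (ha : ∀ n : ℕ, a n =
      (1 / (n : ℝ) + 1 / (n : ℝ) ^ 3) /
        Real.sqrt (1 + 1 / (n : ℝ) ^ 2 - 1 / (n : ℝ) ^ 4 - 1 / (n : ℝ) ^ 6))
    (hc : ∀ n : ℕ, c n =
      (-(n : ℝ) + 1 / (n : ℝ) ^ 3) /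
        Real.sqrt (1 + 1 / (n : ℝ) ^ 2 - 1 / (n : ℝ) ^ 4 - 1 / (n : ℝ) ^ 6))
    (hdist : ∀ n : ℕ, 2 ≤ n → μ.map (ε n) =
      ENNReal.ofReal (1 - 1 / (n : ℝ) ^ 2) • Measure.dirac (a n) +
        ENNReal.ofReal (1 / (n : ℝ) ^ 2) • Measure.dirac (c n)) :
    (∀ n : ℕ, 2 ≤ n → ∫ ω, ε n ω ∂μ = 0 ∧ ∫ ω, (ε n ω) ^ 2 ∂μ = 1) ∧
    (∀ᵐ ω ∂μ, Tendsto (fun k => ∑ i ∈ Finset.Icc 2 k, ε i ω) atTop atTop) := by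
  -- basic facts about the constants
  have hx : ∀ n : ℕ, 2 ≤ n → (2 : ℝ) ≤ (n : ℝ) := by
    intro n hn; exact_mod_cast hn
  have hDpos : ∀ n : ℕ, 2 ≤ n →
      0 < 1 + 1 / (n : ℝ) ^ 2 - 1 / (n : ℝ) ^ 4 - 1 / (n : ℝ) ^ 6 := by
    intro n hn
    have h2 := hx n hn
    have hx0 : (0:ℝ) < (n:ℝ) := by linarith
    have key : 1 + 1 / (n : ℝ) ^ 2 - 1 / (n : ℝ) ^ 4 - 1 / (n : ℝ) ^ 6 =
        (((n:ℝ)^2 - 1) * ((n:ℝ)^2 + 1)^2) / (n:ℝ)^6 := by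
      field_simp; ring
    rw [key]
    have h1 : (0:ℝ) < (n:ℝ)^2 - 1 := by nlinarith
    positivity
  have hspos : ∀ n : ℕ, 2 ≤ n →
      0 < Real.sqrt (1 + 1 / (n : ℝ) ^ 2 - 1 / (n : ℝ) ^ 4 - 1 / (n : ℝ) ^ 6) :=
    fun n hn => Real.sqrt_pos.2 (hDpos n hn)
  have hsle : ∀ n : ℕ, 2 ≤ n →
      Real.sqrt (1 + 1 / (n : ℝ) ^ 2 - 1 / (n : ℝ) ^ 4 - 1 / (n : ℝ) ^ 6) ≤ 2 := by
    intro n hn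
    have h2 := hx n hn
    have hx0 : (0:ℝ) < (n:ℝ) := by linarith
    have h1 : 1 + 1 / (n : ℝ) ^ 2 - 1 / (n : ℝ) ^ 4 - 1 / (n : ℝ) ^ 6 ≤ 4 := by
      have : 1/(n:ℝ)^2 ≤ 1 := by
        rw [div_le_one (by positivity)]; nlinarith
      have h4 : 0 ≤ 1/(n:ℝ)^4 := by positivity
      have h6 : 0 ≤ 1/(n:ℝ)^6 := by positivity
      linarith
    calc Real.sqrt (1 + 1 / (n : ℝ) ^ 2 - 1 / (n : ℝ) ^ 4 - 1 / (n : ℝ) ^ 6)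
        ≤ Real.sqrt 4 := Real.sqrt_le_sqrt h1
      _ = 2 := by
          rw [show (4:ℝ) = 2^2 by norm_num, Real.sqrt_sq (by norm_num)]
  have halb : ∀ n : ℕ, 2 ≤ n → 1 / (2 * (n:ℝ)) ≤ a n := by
    intro n hn
    have h2 := hx n hn
    have hx0 : (0:ℝ) < (n:ℝ) := by linarith
    rw [ha n]
    have hs := hspos n hn
    have hsle2 := hsle n hn
    have hnum : (1:ℝ)/(n:ℝ) ≤ 1 / (n : ℝ) + 1 / (n : ℝ) ^ 3 := by
      have : (0:ℝ) ≤ 1/(n:ℝ)^3 := by positivity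
      linarith
    calc 1 / (2 * (n:ℝ)) = (1/(n:ℝ)) / 2 := by ring
      _ ≤ (1 / (n : ℝ) + 1 / (n : ℝ) ^ 3) / 2 := by
          apply div_le_div_of_nonneg_right hnum (by norm_num) |>.trans_eq rfl
      _ ≤ (1 / (n : ℝ) + 1 / (n : ℝ) ^ 3) /
            Real.sqrt (1 + 1 / (n : ℝ) ^ 2 - 1 / (n : ℝ) ^ 4 - 1 / (n : ℝ) ^ 6) := by
          apply div_le_div_of_nonneg_left _ hs hsle2
          positivity
  -- moments
  have hmom : ∀ n : ℕ, 2 ≤ n → ∫ ω, ε n ω ∂μ = 0 ∧ ∫ ω, (ε n ω) ^ 2 ∂μ = 1 := by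
    intro n hn
    have h2 := hx n hn
    have hx0 : (0:ℝ) < (n:ℝ) := by linarith
    have hx0' : (n:ℝ) ≠ 0 := ne_of_gt hx0
    have hp0 : (0:ℝ) ≤ 1 - 1 / (n:ℝ)^2 := by
      have : 1/(n:ℝ)^2 ≤ 1 := by rw [div_le_one (by positivity)]; nlinarith
      linarith
    have hq0 : (0:ℝ) ≤ 1 / (n:ℝ)^2 := by positivity
    have hD := hDpos n hn
    have hs := hspos n hn
    have hs0 : Real.sqrt (1 + 1 / (n : ℝ) ^ 2 - 1 / (n : ℝ) ^ 4 - 1 / (n : ℝ) ^ 6) ≠ 0 :=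
      ne_of_gt hs
    have hs2 : (Real.sqrt (1 + 1 / (n : ℝ) ^ 2 - 1 / (n : ℝ) ^ 4 - 1 / (n : ℝ) ^ 6))^2
        = 1 + 1 / (n : ℝ) ^ 2 - 1 / (n : ℝ) ^ 4 - 1 / (n : ℝ) ^ 6 :=
      Real.sq_sqrt hD.le
    have key : ∀ f : ℝ → ℝ, Measurable f → ∫ ω, f (ε n ω) ∂μ =
        (1 - 1 / (n:ℝ)^2) * f (a n) + (1 / (n:ℝ)^2) * f (c n) := by
      intro f hf
      have h1 : ∫ ω, f (ε n ω) ∂μ = ∫ x, f x ∂(μ.map (ε n)) :=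
        (integral_map (hmeas n).aemeasurable hf.aestronglyMeasurable).symm
      rw [h1, hdist n hn, two_point_integral f _ _ ENNReal.ofReal_ne_top
        ENNReal.ofReal_ne_top, ENNReal.toReal_ofReal hp0, ENNReal.toReal_ofReal hq0]
    constructor
    · have hkey := key (fun x => x) measurable_id
      rw [hkey, ha n, hc n]
      have hnum : (1 - 1/(n:ℝ)^2) * (1 / (n : ℝ) + 1 / (n : ℝ) ^ 3)
          + (1/(n:ℝ)^2) * (-(n : ℝ) + 1 / (n : ℝ) ^ 3) = 0 := by
        field_simp; ring
      calc (1 - 1/(n:ℝ)^2) * ((1 / (n : ℝ) + 1 / (n : ℝ) ^ 3) /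
            Real.sqrt (1 + 1 / (n : ℝ) ^ 2 - 1 / (n : ℝ) ^ 4 - 1 / (n : ℝ) ^ 6))
          + (1/(n:ℝ)^2) * ((-(n : ℝ) + 1 / (n : ℝ) ^ 3) /
            Real.sqrt (1 + 1 / (n : ℝ) ^ 2 - 1 / (n : ℝ) ^ 4 - 1 / (n : ℝ) ^ 6))
          = ((1 - 1/(n:ℝ)^2) * (1 / (n : ℝ) + 1 / (n : ℝ) ^ 3)
            + (1/(n:ℝ)^2) * (-(n : ℝ) + 1 / (n : ℝ) ^ 3)) /
            Real.sqrt (1 + 1 / (n : ℝ) ^ 2 - 1 / (n : ℝ) ^ 4 - 1 / (n : ℝ) ^ 6) := by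
            ring
        _ = 0 := by rw [hnum, zero_div]
    · have hkey := key (fun x => x^2) (measurable_id.pow_const 2)
      rw [hkey, ha n, hc n, div_pow, div_pow, hs2]
      have hnum : (1 - 1/(n:ℝ)^2) * (1 / (n : ℝ) + 1 / (n : ℝ) ^ 3)^2
          + (1/(n:ℝ)^2) * (-(n : ℝ) + 1 / (n : ℝ) ^ 3)^2 =
          1 + 1 / (n : ℝ) ^ 2 - 1 / (n : ℝ) ^ 4 - 1 / (n : ℝ) ^ 6 := by
        field_simp; ring
      calc (1 - 1/(n:ℝ)^2) * ((1 / (n : ℝ) + 1 / (n : ℝ) ^ 3)^2 /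
            (1 + 1 / (n : ℝ) ^ 2 - 1 / (n : ℝ) ^ 4 - 1 / (n : ℝ) ^ 6))
          + (1/(n:ℝ)^2) * ((-(n : ℝ) + 1 / (n : ℝ) ^ 3)^2 /
            (1 + 1 / (n : ℝ) ^ 2 - 1 / (n : ℝ) ^ 4 - 1 / (n : ℝ) ^ 6))
          = ((1 - 1/(n:ℝ)^2) * (1 / (n : ℝ) + 1 / (n : ℝ) ^ 3)^2
            + (1/(n:ℝ)^2) * (-(n : ℝ) + 1 / (n : ℝ) ^ 3)^2) /
            (1 + 1 / (n : ℝ) ^ 2 - 1 / (n : ℝ) ^ 4 - 1 / (n : ℝ) ^ 6) := by ring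
        _ = 1 := by rw [hnum, div_self (ne_of_gt hD)]
  refine ⟨hmom, ?_⟩
  -- Borel–Cantelli
  set s : ℕ → Set Ω := fun n => {ω | ε n ω ≠ a n} with hs_def
  have hsum : (∑' n, μ (s n)) ≠ ⊤ := by
    set g : ℕ → ℝ := fun n => 1/(n:ℝ)^2 + (if n < 2 then 1 else 0) with hg_def
    have hg0 : ∀ n, 0 ≤ g n := by
      intro n; simp only [hg_def]; positivity
    have hgsum : Summable g := by
      apply Summable.add
      · exact (Real.summable_one_div_nat_pow.2 (by norm_num))
      · apply summable_of_finite_support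
        apply Set.Finite.subset (Set.finite_Iio 2)
        intro n hn
        simp only [Function.mem_support, ne_eq, ite_eq_right_iff, not_forall] at hn
        exact hn.1
    have hle : ∀ n, μ (s n) ≤ ENNReal.ofReal (g n) := by
      intro n
      rcases lt_or_ge n 2 with h | h
      · calc μ (s n) ≤ 1 := prob_le_one
          _ ≤ ENNReal.ofReal (g n) := by
            simp only [hg_def, if_pos h]
            rw [show (1:ℝ)/(n:ℝ)^2 + 1 = 1 + 1/(n:ℝ)^2 by ring]
            rw [ENNReal.ofReal_add (by norm_num) (by positivity), ENNReal.ofReal_one]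
            exact le_self_add
      · have hmap : μ (s n) = (μ.map (ε n)) {a n}ᶜ := by
          rw [Measure.map_apply (hmeas n) (measurableSet_singleton (a n)).compl]
          rfl
        rw [hmap, hdist n h]
        simp only [Measure.add_apply, Measure.smul_apply, smul_eq_mul]
        rw [Measure.dirac_apply' _ (measurableSet_singleton (a n)).compl]
        simp only [Set.indicator_of_notMem (by simp : a n ∉ ({a n}ᶜ : Set ℝ))]
        rw [mul_zero, zero_add]
        calc ENNReal.ofReal (1 / (n:ℝ)^2) * Measure.dirac (c n) {a n}ᶜ
            ≤ ENNReal.ofReal (1 / (n:ℝ)^2) * 1 := by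
              exact mul_le_mul_right prob_le_one _
          _ = ENNReal.ofReal (1 / (n:ℝ)^2) := mul_one _
          _ ≤ ENNReal.ofReal (g n) := by
              apply ENNReal.ofReal_le_ofReal
              simp only [hg_def]
              split <;> norm_num
    have hle2 : (∑' n, μ (s n)) ≤ ENNReal.ofReal (∑' n, g n) := by
      calc (∑' n, μ (s n)) ≤ ∑' n, ENNReal.ofReal (g n) := ENNReal.tsum_le_tsum hle
        _ = ENNReal.ofReal (∑' n, g n) := (ENNReal.ofReal_tsum_of_nonneg hg0 hgsum).symm
    exact ne_top_of_le_ne_top ENNReal.ofReal_ne_top hle2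
  have hae := ae_eventually_notMem hsum
  filter_upwards [hae] with ω hω
  -- ω eventually hits a n
  rw [eventually_atTop] at hω
  obtain ⟨N, hN⟩ := hω
  set M := max N 2 with hM_def
  have hM2 : 2 ≤ M := le_max_right _ _
  have hMN : N ≤ M := le_max_left _ _
  have heq : ∀ i, M < i → ε i ω = a i := by
    intro i hi
    have := hN i (hMN.trans hi.le)
    simpa [hs_def, not_not] using this
  -- harmonic lower bound
  have hharm : Tendsto (fun k : ℕ => ∑ i ∈ Finset.Ioc 0 k, 1/(2*(i:ℝ))) atTop atTop := by
    have h1 : ∀ k : ℕ, ∑ i ∈ Finset.Ioc 0 k, 1/(2*(i:ℝ)) =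
        (1/2) * ∑ i ∈ Finset.range k, 1/((i:ℝ)+1) := by
      intro k
      rw [Finset.mul_sum]
      rw [show Finset.Ioc 0 k = Finset.Ico 1 (k+1) by
        rw [Finset.Ico_add_one_right_eq_Icc, ← Finset.Icc_add_one_left_eq_Ioc, zero_add]]
      rw [Finset.sum_Ico_eq_sum_range]
      simp only [Nat.add_sub_cancel]
      apply Finset.sum_congr rfl
      intro i _
      have h0 : (1:ℝ) + (i:ℝ) ≠ 0 := by positivity
      push_cast
      field_simp
      ring
    simp only [h1]
    exact (Real.tendsto_sum_range_one_div_nat_succ_atTop).const_mul_atTop (by norm_num)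
  have hharm2 : Tendsto (fun k : ℕ => ((∑ i ∈ Finset.Ioc 1 M, ε i ω)
      - ∑ i ∈ Finset.Ioc 0 M, 1/(2*(i:ℝ))) + ∑ i ∈ Finset.Ioc 0 k, 1/(2*(i:ℝ)))
      atTop atTop := tendsto_atTop_add_const_left _ _ hharm
  apply tendsto_atTop_mono' _ _ hharm2
  filter_upwards [eventually_ge_atTop M] with k hk
  have hicc : Finset.Icc 2 k = Finset.Ioc 1 k := (Finset.Icc_add_one_left_eq_Ioc 1 k).symm
  rw [hicc]
  have hsplit : ∑ i ∈ Finset.Ioc 1 M, ε i ω + ∑ i ∈ Finset.Ioc M k, ε i ω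
      = ∑ i ∈ Finset.Ioc 1 k, ε i ω :=
    Finset.sum_Ioc_consecutive _ (by omega) hk
  have hsplit2 : ∑ i ∈ Finset.Ioc 0 M, 1/(2*(i:ℝ)) + ∑ i ∈ Finset.Ioc M k, 1/(2*(i:ℝ))
      = ∑ i ∈ Finset.Ioc 0 k, 1/(2*(i:ℝ)) :=
    Finset.sum_Ioc_consecutive _ (by omega) hk
  rw [← hsplit, ← hsplit2]
  have hterm : ∑ i ∈ Finset.Ioc M k, 1/(2*(i:ℝ)) ≤ ∑ i ∈ Finset.Ioc M k, ε i ω := by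
    apply Finset.sum_le_sum
    intro i hi
    rw [Finset.mem_Ioc] at hi
    rw [heq i hi.1]
    exact halb i (by omega)
  linarith
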